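/- Let f : [0,1) → [0,1) be a piecewise λ-affine contraction (branches φ_j(x) = λx + δ_j, 0 < λ < 1) with breakpoints 0 = a₀ < a₁ < ... < a_{k-1}. Suppose there exist δ > 0 and n₀ ∈ ℕ such that |H_ω(λ) − a_i| ≥ δ for all 0 ≤ i < k, all n ≥ n₀, and every itinerary ω of order n, where H_ω(λ) = Σ_{j=0}^{n-1} λ^j δ_{i_{n-1-j}} for ω = (i₀,...,i_{n-1}). Then the set Q = ⋃_{n≥0} f^{-n}(S) is finite, where S is the singular set of f. -/

import Mathlib

/-- For a piecewise λ-affine contraction `f` of `[0,1)` (of the form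
`f x = λx + d x` with `d` constant on the pieces of the finite singular set `S`,
`|d| ≤ 1`, breakpoints `a₀ = 0 < a₁ < ⋯ < a_{k-1}` among the singular points, and
every singular point that is not a breakpoint mapped to `0`): if there are `δ > 0` and
`n₀` with `|H_ω(λ) - aᵢ| = |f^[n] x - λⁿ x - aᵢ| ≥ δ` for all `n ≥ n₀`, all realized
itineraries (i.e. all `x ∈ [0,1)`) and all `0 ≤ i < k`, then `Q = ⋃_{n≥0} f^{-n}(S)`
is finite. -/
theorem stmt_13 (k : ℕ) (hk : 1 ≤ k) (lam : ℝ) (hlam0 : 0 < lam) (hlam1 : lam < 1)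
    (a : Fin (k+1) → ℝ) (ha : StrictMono a) (ha0 : a 0 = 0) (hak : a (Fin.last k) = 1)
    (S : Set ℝ) (hSfin : S.Finite) (hSsub : S ⊆ Set.Ico 0 1)
    (hbreak : ∀ i : Fin k, a i.castSucc ∈ S)
    (f : ℝ → ℝ) (hmap : Set.MapsTo f (Set.Ico 0 1) (Set.Ico 0 1))
    (d : ℝ → ℝ) (hd1 : ∀ x ∈ Set.Ico (0:ℝ) 1, |d x| ≤ 1)
    (hdpiece : ∀ x ∈ Set.Ico (0:ℝ) 1, ∀ y ∈ Set.Ico (0:ℝ) 1, x ≤ y →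
      (∀ s ∈ S, s ∉ Set.Ioc x y) → d x = d y)
    (hf : ∀ x ∈ Set.Ico (0:ℝ) 1, f x = lam * x + d x)
    (hsing0 : ∀ s ∈ S, (∀ i : Fin (k+1), s ≠ a i) → f s = 0)
    (δ : ℝ) (hδ : 0 < δ) (n₀ : ℕ)
    (hsep : ∀ n : ℕ, n₀ ≤ n → ∀ x ∈ Set.Ico (0:ℝ) 1, ∀ i : Fin k,
      δ ≤ |f^[n] x - lam ^ n * x - a i.castSucc|) :
    {x | x ∈ Set.Ico (0:ℝ) 1 ∧ ∃ n : ℕ, f^[n] x ∈ S}.Finite := by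
  classical
  have h0S : (0:ℝ) ∈ S := by
    have h := hbreak ⟨0, hk⟩
    have : ((⟨0, hk⟩ : Fin k).castSucc) = 0 := by ext; simp
    rwa [this, ha0] at h
  -- d has range covered by d '' S
  have hd_range : ∀ x ∈ Set.Ico (0:ℝ) 1, ∃ s ∈ S, d s = d x := by
    intro x hx
    have hfin : (S ∩ Set.Icc 0 x).Finite := hSfin.subset Set.inter_subset_left
    have hne : (S ∩ Set.Icc 0 x).Nonempty := ⟨0, h0S, le_rfl, hx.1⟩
    obtain ⟨s, hsmem, hsmax⟩ := Set.Finite.exists_maximalFor id _ hfin hne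
    refine ⟨s, hsmem.1, ?_⟩
    apply hdpiece s (hSsub hsmem.1) x hx hsmem.2.2
    intro s' hs' hmem
    have : s' ∈ S ∩ Set.Icc 0 x := ⟨hs', (hSsub hs').1, hmem.2⟩
    have := hsmax (j := s') this (le_of_lt hmem.1)
    simp only [id] at this
    exact absurd this (not_le_of_gt hmem.1)
  -- preimage of a finite set is finite
  have hpre : ∀ T : Set ℝ, T.Finite → {x | x ∈ Set.Ico (0:ℝ) 1 ∧ f x ∈ T}.Finite := by
    intro T hT
    have hsub : {x | x ∈ Set.Ico (0:ℝ) 1 ∧ f x ∈ T} ⊆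
        ⋃ t ∈ T, {x | x ∈ Set.Ico (0:ℝ) 1 ∧ f x = t} := by
      rintro x ⟨hx, hfx⟩
      exact Set.mem_biUnion hfx ⟨hx, rfl⟩
    refine Set.Finite.subset (Set.Finite.biUnion hT ?_) hsub
    intro t ht
    apply Set.Finite.of_finite_image (f := d)
    · apply (hSfin.image d).subset
      rintro _ ⟨x, ⟨hx, hfx⟩, rfl⟩
      obtain ⟨s, hs, hds⟩ := hd_range x hx
      exact ⟨s, hs, hds⟩
    · rintro x ⟨hx, hfx⟩ y ⟨hy, hfy⟩ hdxy
      rw [hf x hx] at hfx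
      rw [hf y hy] at hfy
      have : lam * x = lam * y := by linarith
      exact mul_left_cancel₀ (ne_of_gt hlam0) this
  -- each level set is finite
  have hiter : ∀ n : ℕ, {x | x ∈ Set.Ico (0:ℝ) 1 ∧ f^[n] x ∈ S}.Finite := by
    intro n
    induction n with
    | zero =>
      apply hSfin.subset
      intro x hx
      simpa using hx.2
    | succ n ih =>
      have hsub : {x | x ∈ Set.Ico (0:ℝ) 1 ∧ f^[n+1] x ∈ S} ⊆
          {x | x ∈ Set.Ico (0:ℝ) 1 ∧ f x ∈ {y | y ∈ Set.Ico (0:ℝ) 1 ∧ f^[n] y ∈ S}} := by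
        rintro x ⟨hx, hfx⟩
        rw [Function.iterate_succ_apply] at hfx
        exact ⟨hx, hmap hx, hfx⟩
      exact (hpre _ ih).subset hsub
  -- choose N
  obtain ⟨M, hM⟩ := exists_pow_lt_of_lt_one hδ hlam1
  set N := max M n₀ with hNdef
  have hNδ : ∀ n, N ≤ n → lam ^ n < δ := by
    intro n hn
    calc lam ^ n ≤ lam ^ M :=
          pow_le_pow_of_le_one hlam0.le hlam1.le (le_trans (le_max_left _ _) hn)
      _ < δ := hM
  -- for n ≥ N the orbit avoids S
  have key : ∀ x ∈ Set.Ico (0:ℝ) 1, ∀ n, N ≤ n → f^[n] x ∉ S := by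
    intro x hx n hn hmem
    have hxI : f^[n] x ∈ Set.Ico (0:ℝ) 1 := Set.MapsTo.iterate hmap n hx
    have hn₀ : n₀ ≤ n := le_trans (le_max_right _ _) hn
    have hln : lam ^ n * x < δ := by
      have h1 : lam ^ n * x ≤ lam ^ n * 1 :=
        mul_le_mul_of_nonneg_left hx.2.le (pow_nonneg hlam0.le _)
      have := hNδ n hn
      linarith
    have hln0 : 0 ≤ lam ^ n * x := mul_nonneg (pow_nonneg hlam0.le _) hx.1
    by_cases hcase : ∀ i : Fin (k+1), f^[n] x ≠ a i
    · have hzero : f (f^[n] x) = 0 := hsing0 _ hmem hcase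
      have hsucc : f^[n+1] x = 0 := by rw [Function.iterate_succ_apply', hzero]
      have hs := hsep (n+1) (le_trans hn₀ (Nat.le_succ n)) x hx ⟨0, hk⟩
      have ha0' : a ((⟨0, hk⟩ : Fin k).castSucc) = 0 := by
        have : ((⟨0, hk⟩ : Fin k).castSucc) = 0 := by ext; simp
        rw [this, ha0]
      rw [hsucc, ha0'] at hs
      have habs : |0 - lam ^ (n+1) * x - 0| = lam ^ (n+1) * x := by
        rw [show (0:ℝ) - lam ^ (n+1) * x - 0 = -(lam ^ (n+1) * x) by ring, abs_neg,
          abs_of_nonneg (mul_nonneg (pow_nonneg hlam0.le _) hx.1)]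
      rw [habs] at hs
      have hln' : lam ^ (n+1) * x < δ := by
        have h1 : lam ^ (n+1) * x ≤ lam ^ (n+1) * 1 :=
          mul_le_mul_of_nonneg_left hx.2.le (pow_nonneg hlam0.le _)
        have := hNδ (n+1) (le_trans hn (Nat.le_succ n))
        linarith
      linarith
    · push_neg at hcase
      obtain ⟨i, hi⟩ := hcase
      have hilt : (i : ℕ) < k := by
        by_contra h
        have hik : i = Fin.last k := by
          ext
          have := i.isLt
          simp only [Fin.val_last]
          omega
        rw [hik, hak] at hi
        exact absurd hxI.2 (by rw [hi]; exact lt_irrefl 1)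
      have hs := hsep n hn₀ x hx ⟨i, hilt⟩
      have hcast : a ((⟨(i : ℕ), hilt⟩ : Fin k).castSucc) = a i :=
        congrArg a (Fin.ext rfl)
      rw [hcast, hi] at hs
      have habs : |a i - lam ^ n * x - a i| = lam ^ n * x := by
        rw [show a i - lam ^ n * x - a i = -(lam ^ n * x) by ring, abs_neg,
          abs_of_nonneg hln0]
      rw [habs] at hs
      linarith
  -- conclude
  have hsub : {x | x ∈ Set.Ico (0:ℝ) 1 ∧ ∃ n : ℕ, f^[n] x ∈ S} ⊆
      ⋃ n ∈ Finset.range N, {x | x ∈ Set.Ico (0:ℝ) 1 ∧ f^[n] x ∈ S} := by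
    rintro x ⟨hx, n, hn⟩
    have hnN : n < N := by
      by_contra h
      exact key x hx n (le_of_not_gt h) hn
    exact Set.mem_biUnion (Finset.mem_range.2 hnN) ⟨hx, hn⟩
  exact (Set.Finite.biUnion (Finset.range N).finite_toSet fun n _ => hiter n).subset hsub
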